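/- Packing selection lemma: let 0 < α ≤ s and let {I_j} be a family of pairwise non-overlapping basic cubes of K. Then there exists a subfamily {I_{j_k}} such that (i) for every basic cube I, Σ_{I_{j_k} ⊂ I} μ(I_{j_k})^{α/s} ≤ 2 μ(I)^{α/s}, and (ii) H^α_μ(∪_j I_j) ≤ 2 Σ_k μ(I_{j_k})^{α/s}. -/

import Mathlib

open MeasureTheory Set Filter
open scoped ENNReal NNReal Topology

noncomputable section

abbrev Pt (d : ℕ) := EuclideanSpace ℝ (Fin d)

/-- An iterated function system of contractive similitudes on ℝ^d with attractor `K`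
satisfying the strong separation condition. -/
structure IFS (d m : ℕ) where
  S : Fin m → Pt d → Pt d
  r : Fin m → ℝ
  r_pos : ∀ i, 0 < r i
  r_lt_one : ∀ i, r i < 1
  similitude : ∀ i x y, dist (S i x) (S i y) = r i * dist x y
  K : Set (Pt d)
  K_nonempty : K.Nonempty
  K_compact : IsCompact K
  K_invariant : K = ⋃ i, S i '' K
  ssc : Pairwise fun i j => Disjoint (S i '' K) (S j '' K)

namespace IFS

variable {d m : ℕ}

/-- The composition `S_{i₁} ∘ ⋯ ∘ S_{iₙ}` for the word `w = i₁ ⋯ iₙ`. -/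
def cylMap (Φ : IFS d m) (w : List (Fin m)) : Pt d → Pt d :=
  w.foldr (fun i g => Φ.S i ∘ g) id

/-- The basic cube (cylinder set) `K_w = S_{i₁} ∘ ⋯ ∘ S_{iₙ}(K)`. -/
def cyl (Φ : IFS d m) (w : List (Fin m)) : Set (Pt d) :=
  Φ.cylMap w '' Φ.K

/-- `μ` is the self-similar probability measure associated with the probability
vector `p` (with all `p i > 0`), i.e. `μ = ∑ i, p i • μ ∘ S i ⁻¹`, supported on `K`. -/
def SelfSimilar (Φ : IFS d m) (p : Fin m → ℝ≥0∞) (μ : Measure (Pt d)) : Prop :=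
  (∑ i, p i = 1) ∧ (∀ i, 0 < p i) ∧ IsProbabilityMeasure μ ∧ μ Φ.K = 1 ∧
    μ = ∑ i, p i • μ.map (Φ.S i)

/-- The α-dimensional Hausdorff content on `K` associated with `μ`, defined via
coverings by countable families of basic cubes; `s` is the Hausdorff dimension of `K`. -/
def hContent (Φ : IFS d m) (μ : Measure (Pt d)) (s α : ℝ) (E : Set (Pt d)) : ℝ≥0∞ :=
  ⨅ (C : Set (List (Fin m))) (_ : C.Countable) (_ : E ⊆ ⋃ w ∈ C, Φ.cyl w),
    ∑' w : C, μ (Φ.cyl w.1) ^ (α / s)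

/-- The dyadic-type Hardy–Littlewood maximal operator over basic cubes containing `x`. -/
def maxOp (Φ : IFS d m) (μ : Measure (Pt d)) (f : Pt d → ℝ) (x : Pt d) : ℝ≥0∞ :=
  ⨆ (w : List (Fin m)) (_ : x ∈ Φ.cyl w),
    (μ (Φ.cyl w))⁻¹ * ∫⁻ y in Φ.cyl w, ENNReal.ofReal |f y| ∂μ

end IFS

/-- The Choquet integral of `g` over `E` with respect to the monotone set function `ν`. -/
def choquetInt {X : Type*} (ν : Set X → ℝ≥0∞) (E : Set X) (g : X → ℝ≥0∞) : ℝ≥0∞ :=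
  ∫⁻ t in Set.Ioi (0 : ℝ), ν {x ∈ E | ENNReal.ofReal t < g x}

/-- `log⁺ t = max (0, log t)`. -/
def posLog (t : ℝ) : ℝ := max 0 (Real.log t)

namespace IFS

variable {d m : ℕ}

variable (Φ : IFS d m)

lemma cylMap_cons (i : Fin m) (w : List (Fin m)) :
    Φ.cylMap (i :: w) = Φ.S i ∘ Φ.cylMap w := rfl

lemma cyl_cons (i : Fin m) (w : List (Fin m)) :
    Φ.cyl (i :: w) = Φ.S i '' Φ.cyl w := by
  rw [cyl, cylMap_cons, Set.image_comp]; rfl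

lemma cylMap_append (a b : List (Fin m)) :
    Φ.cylMap (a ++ b) = Φ.cylMap a ∘ Φ.cylMap b := by
  induction a with
  | nil => rfl
  | cons i a ih =>
      funext x
      simp [cylMap_cons, ih]

lemma cyl_subset_K (w : List (Fin m)) : Φ.cyl w ⊆ Φ.K := by
  induction w with
  | nil => simp [cyl, cylMap]
  | cons i w ih =>
      rw [cyl_cons]
      refine (Set.image_mono ih).trans ?_
      conv_rhs => rw [Φ.K_invariant]
      exact Set.subset_iUnion (fun j => Φ.S j '' Φ.K) i

lemma cyl_prefix {v w : List (Fin m)} (h : v <+: w) : Φ.cyl w ⊆ Φ.cyl v := by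
  obtain ⟨u, rfl⟩ := h
  rw [cyl, cylMap_append, Set.image_comp]
  exact Set.image_mono (Φ.cyl_subset_K u)

lemma S_injective (i : Fin m) : Function.Injective (Φ.S i) := by
  intro x y h
  have h1 := Φ.similitude i x y
  rw [h, dist_self] at h1
  rcases mul_eq_zero.mp h1.symm with h2 | h2
  · exact absurd h2 (ne_of_gt (Φ.r_pos i))
  · exact dist_eq_zero.mp h2

lemma cyl_nonempty (w : List (Fin m)) : (Φ.cyl w).Nonempty :=
  Φ.K_nonempty.image _

lemma cyl_disjoint : ∀ {v w : List (Fin m)}, ¬ v <+: w → ¬ w <+: v →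
    Disjoint (Φ.cyl v) (Φ.cyl w) := by
  intro v
  induction v with
  | nil => intro w h1 _; exact absurd (List.nil_prefix) h1
  | cons i v ih =>
      intro w h1 h2
      cases w with
      | nil => exact absurd (List.nil_prefix) h2
      | cons j w =>
          by_cases hij : i = j
          · subst hij
            have h1' : ¬ v <+: w := fun h => h1 (List.cons_prefix_cons.mpr ⟨rfl, h⟩)
            have h2' : ¬ w <+: v := fun h => h2 (List.cons_prefix_cons.mpr ⟨rfl, h⟩)
            have hd := ih h1' h2'
            rw [cyl_cons, cyl_cons, Set.disjoint_left]
            rintro x ⟨a, ha, rfl⟩ ⟨b, hb, hba⟩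
            cases Φ.S_injective i hba
            exact (Set.disjoint_left.mp hd ha) hb
          · refine (Φ.ssc hij).mono ?_ ?_
            · rw [cyl_cons]; exact Set.image_mono (Φ.cyl_subset_K v)
            · rw [cyl_cons]; exact Set.image_mono (Φ.cyl_subset_K w)

/-- The greedy selection process: at stage `n`, the word with code `n` is added to the
selection if it belongs to `C` and adding it preserves the packing condition. -/
def selAux (Φ : IFS d m) (μ : Measure (Pt d)) (θ : ℝ) (C : Set (List (Fin m))) :
    ℕ → Set (List (Fin m))
  | 0 => ∅
  | (n+1) => selAux Φ μ θ C n ∪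
      {w | Encodable.encode w = n ∧ w ∈ C ∧ ∀ I : List (Fin m), Φ.cyl w ⊆ Φ.cyl I →
        (∑' v : {v : List (Fin m) // v ∈ selAux Φ μ θ C n ∧ Φ.cyl v ⊆ Φ.cyl I},
          μ (Φ.cyl v.1) ^ θ) + μ (Φ.cyl w) ^ θ ≤ 2 * μ (Φ.cyl I) ^ θ}

variable (μ : Measure (Pt d)) (θ : ℝ) (C : Set (List (Fin m)))

lemma selAux_encode_lt : ∀ n w, w ∈ selAux Φ μ θ C n → Encodable.encode w < n := by
  intro n
  induction n with
  | zero => intro w hw; simp [selAux] at hw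
  | succ n ih =>
      rintro w (hw | hw)
      · exact Nat.lt_succ_of_lt (ih w hw)
      · rw [hw.1]; exact Nat.lt_succ_self n

lemma selAux_mono : Monotone (selAux Φ μ θ C) :=
  monotone_nat_of_le_succ fun _ => Set.subset_union_left

lemma selAux_subset : ∀ n, selAux Φ μ θ C n ⊆ C := by
  intro n
  induction n with
  | zero => simp [selAux]
  | succ n ih => exact Set.union_subset ih fun w hw => hw.2.1

lemma mem_selAux_encode : ∀ n w, w ∈ selAux Φ μ θ C n →
    w ∈ selAux Φ μ θ C (Encodable.encode w + 1) := by
  intro n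
  induction n with
  | zero => intro w hw; simp [selAux] at hw
  | succ n ih =>
      rintro w (hw | hw)
      · exact ih w hw
      · rw [hw.1]; exact Or.inr hw


end IFS

/-- Packing selection lemma: from a family of pairwise disjoint basic cubes one can select
a subfamily satisfying the packing condition and controlling the content of the union. -/
theorem packing_lemma (d m : ℕ) (Φ : IFS d m) (p : Fin m → ℝ≥0∞)
    (μ : Measure (Pt d)) (hμ : Φ.SelfSimilar p μ)
    (s : ℝ) (hs : 0 < s) (hdim : ∑ i, Φ.r i ^ s = 1)
    (α : ℝ) (hα : 0 < α) (hαs : α ≤ s)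
    (C : Set (List (Fin m))) (hC : C.Countable) (hdisj : C.PairwiseDisjoint Φ.cyl) :
    ∃ C' ⊆ C,
      (∀ I : List (Fin m),
        ∑' w : {w : List (Fin m) // w ∈ C' ∧ Φ.cyl w ⊆ Φ.cyl I},
            μ (Φ.cyl w.1) ^ (α / s) ≤ 2 * μ (Φ.cyl I) ^ (α / s)) ∧
      Φ.hContent μ s α (⋃ w ∈ C, Φ.cyl w) ≤
        2 * ∑' w : C', μ (Φ.cyl w.1) ^ (α / s) := by
  classical
  haveI : IsProbabilityMeasure μ := hμ.2.2.1
  have hθ0 : 0 ≤ α / s := le_of_lt (div_pos hα hs)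
  have hf1 : ∀ w : List (Fin m), μ (Φ.cyl w) ^ (α / s) ≤ 1 :=
    fun w => ENNReal.rpow_le_one prob_le_one hθ0
  have hfne : ∀ w : List (Fin m), μ (Φ.cyl w) ^ (α / s) ≠ ⊤ :=
    fun w => ((hf1 w).trans_lt ENNReal.one_lt_top).ne
  have hfmono : ∀ {w I : List (Fin m)}, Φ.cyl w ⊆ Φ.cyl I →
      μ (Φ.cyl w) ^ (α / s) ≤ μ (Φ.cyl I) ^ (α / s) :=
    fun h => ENNReal.rpow_le_rpow (measure_mono h) hθ0
  set C' : Set (List (Fin m)) := ⋃ n, IFS.selAux Φ μ (α / s) C n with hC'def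
  have hsubC : C' ⊆ C := Set.iUnion_subset fun n => Φ.selAux_subset μ (α / s) C n
  have hmemC' : ∀ {w : List (Fin m)} {n : ℕ}, w ∈ IFS.selAux Φ μ (α / s) C n → w ∈ C' :=
    fun {w n} h => Set.mem_iUnion.mpr ⟨n, h⟩
  -- Part (i): packing condition.
  have key_pack : ∀ I : List (Fin m),
      (∑' w : {w : List (Fin m) // w ∈ C' ∧ Φ.cyl w ⊆ Φ.cyl I},
        μ (Φ.cyl w.1) ^ (α / s)) ≤ 2 * μ (Φ.cyl I) ^ (α / s) := by
    intro I
    have finclaim : ∀ G : Finset (List (Fin m)),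
        (↑G : Set (List (Fin m))) ⊆ {v | v ∈ C' ∧ Φ.cyl v ⊆ Φ.cyl I} →
        ∑ v ∈ G, μ (Φ.cyl v) ^ (α / s) ≤ 2 * μ (Φ.cyl I) ^ (α / s) := by
      intro G hG
      rcases G.eq_empty_or_nonempty with rfl | hne
      · simp
      obtain ⟨w, hwG, hmax⟩ := G.exists_max_image Encodable.encode hne
      obtain ⟨hwC', hwI⟩ := hG hwG
      have hw1 : w ∈ IFS.selAux Φ μ (α / s) C (Encodable.encode w + 1) := by
        obtain ⟨k, hk⟩ := Set.mem_iUnion.mp hwC'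
        exact Φ.mem_selAux_encode μ (α / s) C k w hk
      have hw0 : w ∉ IFS.selAux Φ μ (α / s) C (Encodable.encode w) :=
        fun h => lt_irrefl _ (Φ.selAux_encode_lt μ (α / s) C _ w h)
      simp only [IFS.selAux] at hw1
      rcases hw1 with hw1 | hw1
      · exact absurd hw1 hw0
      have hcond := hw1.2.2 I hwI
      have herase : ∀ v ∈ G.erase w,
          v ∈ {v : List (Fin m) | v ∈ IFS.selAux Φ μ (α / s) C (Encodable.encode w) ∧
            Φ.cyl v ⊆ Φ.cyl I} := by
        intro v hv
        obtain ⟨hvw, hvG⟩ := Finset.mem_erase.mp hv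
        obtain ⟨hvC', hvI⟩ := hG hvG
        refine ⟨?_, hvI⟩
        obtain ⟨k, hk⟩ := Set.mem_iUnion.mp hvC'
        have h1 := Φ.mem_selAux_encode μ (α / s) C k v hk
        have h2 : Encodable.encode v < Encodable.encode w :=
          lt_of_le_of_ne (hmax v hvG) fun h => hvw (Encodable.encode_injective h)
        exact Φ.selAux_mono μ (α / s) C (Nat.succ_le_of_lt h2) h1
      have hEsum : ∑ v ∈ G.erase w, μ (Φ.cyl v) ^ (α / s) ≤
          ∑' v : {v : List (Fin m) // v ∈ IFS.selAux Φ μ (α / s) C (Encodable.encode w) ∧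
            Φ.cyl v ⊆ Φ.cyl I}, μ (Φ.cyl v.1) ^ (α / s) := by
        calc ∑ v ∈ G.erase w, μ (Φ.cyl v) ^ (α / s)
            = ∑ v ∈ G.erase w,
              Set.indicator {v : List (Fin m) | v ∈ IFS.selAux Φ μ (α / s) C
                  (Encodable.encode w) ∧ Φ.cyl v ⊆ Φ.cyl I}
                (fun v => μ (Φ.cyl v) ^ (α / s)) v := by
              refine Finset.sum_congr rfl fun v hv => ?_
              rw [Set.indicator_of_mem (herase v hv)]
          _ ≤ ∑' v, Set.indicator {v : List (Fin m) | v ∈ IFS.selAux Φ μ (α / s) C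
                  (Encodable.encode w) ∧ Φ.cyl v ⊆ Φ.cyl I}
                (fun v => μ (Φ.cyl v) ^ (α / s)) v := ENNReal.sum_le_tsum _
          _ = _ := (tsum_subtype _ _).symm
      calc ∑ v ∈ G, μ (Φ.cyl v) ^ (α / s)
          = ∑ v ∈ G.erase w, μ (Φ.cyl v) ^ (α / s) + μ (Φ.cyl w) ^ (α / s) :=
            (Finset.sum_erase_add G _ hwG).symm
        _ ≤ (∑' v : {v : List (Fin m) // v ∈ IFS.selAux Φ μ (α / s) C (Encodable.encode w) ∧
              Φ.cyl v ⊆ Φ.cyl I}, μ (Φ.cyl v.1) ^ (α / s)) + μ (Φ.cyl w) ^ (α / s) :=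
            add_le_add_left hEsum _
        _ ≤ 2 * μ (Φ.cyl I) ^ (α / s) := hcond
    rw [ENNReal.tsum_eq_iSup_sum]
    refine iSup_le fun F => ?_
    have hside : (↑(F.image Subtype.val) : Set (List (Fin m))) ⊆
        {v | v ∈ C' ∧ Φ.cyl v ⊆ Φ.cyl I} := by
      intro v hv
      simp only [Finset.coe_image, Set.mem_image] at hv
      obtain ⟨b, _, rfl⟩ := hv
      exact b.2
    have := finclaim (F.image Subtype.val) hside
    rwa [Finset.sum_image (fun x _ y _ h => Subtype.ext h)] at this
  -- Rejected cubes produce witness cubes.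
  have key_rej : ∀ w ∈ C, w ∉ C' → ∃ I : List (Fin m), Φ.cyl w ⊆ Φ.cyl I ∧
      μ (Φ.cyl I) ^ (α / s) <
        ∑' v : {v : List (Fin m) // v ∈ C' ∧ Φ.cyl v ⊆ Φ.cyl I},
          μ (Φ.cyl v.1) ^ (α / s) := by
    intro w hwC hw
    have h1 : w ∉ IFS.selAux Φ μ (α / s) C (Encodable.encode w + 1) :=
      fun h => hw (hmemC' h)
    simp only [IFS.selAux] at h1
    have h2 : ¬ (Encodable.encode w = Encodable.encode w ∧ w ∈ C ∧
        ∀ I : List (Fin m), Φ.cyl w ⊆ Φ.cyl I →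
        (∑' v : {v : List (Fin m) // v ∈ IFS.selAux Φ μ (α / s) C (Encodable.encode w) ∧
          Φ.cyl v ⊆ Φ.cyl I}, μ (Φ.cyl v.1) ^ (α / s)) + μ (Φ.cyl w) ^ (α / s) ≤
          2 * μ (Φ.cyl I) ^ (α / s)) := fun h => h1 (Or.inr h)
    push_neg at h2
    obtain ⟨I, hsub, hlt⟩ := h2 rfl hwC
    refine ⟨I, hsub, ?_⟩
    have hmono2 : (∑' v : {v : List (Fin m) // v ∈ IFS.selAux Φ μ (α / s) C
          (Encodable.encode w) ∧ Φ.cyl v ⊆ Φ.cyl I}, μ (Φ.cyl v.1) ^ (α / s)) ≤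
        ∑' v : {v : List (Fin m) // v ∈ C' ∧ Φ.cyl v ⊆ Φ.cyl I},
          μ (Φ.cyl v.1) ^ (α / s) :=
      ENNReal.tsum_mono_subtype (fun v => μ (Φ.cyl v) ^ (α / s))
        (s := {v : List (Fin m) | v ∈ IFS.selAux Φ μ (α / s) C (Encodable.encode w) ∧
          Φ.cyl v ⊆ Φ.cyl I})
        (t := {v : List (Fin m) | v ∈ C' ∧ Φ.cyl v ⊆ Φ.cyl I})
        fun v hv => ⟨hmemC' hv.1, hv.2⟩
    have hend : μ (Φ.cyl I) ^ (α / s) + μ (Φ.cyl I) ^ (α / s) <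
        (∑' v : {v : List (Fin m) // v ∈ C' ∧ Φ.cyl v ⊆ Φ.cyl I},
          μ (Φ.cyl v.1) ^ (α / s)) + μ (Φ.cyl I) ^ (α / s) := by
      calc μ (Φ.cyl I) ^ (α / s) + μ (Φ.cyl I) ^ (α / s)
          = 2 * μ (Φ.cyl I) ^ (α / s) := (two_mul _).symm
        _ < (∑' v : {v : List (Fin m) // v ∈ IFS.selAux Φ μ (α / s) C
              (Encodable.encode w) ∧ Φ.cyl v ⊆ Φ.cyl I}, μ (Φ.cyl v.1) ^ (α / s)) +
              μ (Φ.cyl w) ^ (α / s) := hlt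
        _ ≤ _ := add_le_add hmono2 (hfmono hsub)
    exact (ENNReal.add_lt_add_iff_right (hfne I)).mp hend
  -- Witness sets and their minimal elements.
  set W : Set (List (Fin m)) := {I | μ (Φ.cyl I) ^ (α / s) <
      ∑' v : {v : List (Fin m) // v ∈ C' ∧ Φ.cyl v ⊆ Φ.cyl I},
        μ (Φ.cyl v.1) ^ (α / s)} with hWdef
  set W2 : Set (List (Fin m)) := {I | I ∈ W ∧ ∀ J, J <+: I → J ∈ W → J = I} with hW2def
  have hWmin : ∀ n : ℕ, ∀ I : List (Fin m), I.length = n → I ∈ W → ∃ J ∈ W2, J <+: I := by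
    intro n
    induction n using Nat.strong_induction_on with
    | _ n ih =>
        intro I hlen hI
        by_cases hI' : I ∈ W2
        · exact ⟨I, hI', List.prefix_refl I⟩
        · have h : ¬ ∀ J, J <+: I → J ∈ W → J = I := fun h => hI' ⟨hI, h⟩
          push_neg at h
          obtain ⟨J, hJI, hJW, hne⟩ := h
          have hlt : J.length < n := by
            rw [← hlen]
            exact lt_of_le_of_ne hJI.length_le fun h => hne (hJI.eq_of_length h)
          obtain ⟨K, hK, hKJ⟩ := ih J.length hlt J rfl hJW
          exact ⟨K, hK, hKJ.trans hJI⟩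
  -- The covering family.
  have hDcov : (⋃ w ∈ C, Φ.cyl w) ⊆ ⋃ u ∈ C' ∪ W2, Φ.cyl u := by
    intro x hx
    rw [Set.mem_iUnion₂] at hx ⊢
    obtain ⟨w, hwC, hxw⟩ := hx
    by_cases hw : w ∈ C'
    · exact ⟨w, Or.inl hw, hxw⟩
    · obtain ⟨I, hsub, hIW⟩ := key_rej w hwC hw
      obtain ⟨J, hJW2, hJI⟩ := hWmin I.length I rfl hIW
      exact ⟨J, Or.inr hJW2, Φ.cyl_prefix hJI (hsub hxw)⟩
  have h1 : Φ.hContent μ s α (⋃ w ∈ C, Φ.cyl w) ≤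
      ∑' u : ↥(C' ∪ W2), μ (Φ.cyl u.1) ^ (α / s) := by
    rw [IFS.hContent]
    exact iInf_le_of_le (C' ∪ W2)
      (iInf_le_of_le (Set.to_countable _) (iInf_le_of_le hDcov le_rfl))
  have h2 : (∑' u : ↥(C' ∪ W2), μ (Φ.cyl u.1) ^ (α / s)) ≤
      (∑' u : ↥C', μ (Φ.cyl u.1) ^ (α / s)) + ∑' u : ↥W2, μ (Φ.cyl u.1) ^ (α / s) :=
    ENNReal.tsum_union_le (fun w => μ (Φ.cyl w) ^ (α / s)) C' W2
  have h3 : (∑' u : ↥W2, μ (Φ.cyl u.1) ^ (α / s)) ≤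
      ∑' v : ↥C', μ (Φ.cyl v.1) ^ (α / s) := by
    have step1 : (∑' u : ↥W2, μ (Φ.cyl u.1) ^ (α / s)) ≤
        ∑' u : ↥W2, ∑' v : {v : List (Fin m) // v ∈ C' ∧ Φ.cyl v ⊆ Φ.cyl u.1},
          μ (Φ.cyl v.1) ^ (α / s) :=
      ENNReal.tsum_le_tsum fun u => le_of_lt u.2.1
    refine step1.trans ?_
    have step2 : (∑' u : ↥W2, ∑' v : {v : List (Fin m) // v ∈ C' ∧ Φ.cyl v ⊆ Φ.cyl u.1},
          μ (Φ.cyl v.1) ^ (α / s)) =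
        ∑' x : Σ u : ↥W2, {v : List (Fin m) // v ∈ C' ∧ Φ.cyl v ⊆ Φ.cyl u.1},
          μ (Φ.cyl x.2.1) ^ (α / s) :=
      (ENNReal.tsum_sigma'
        (fun x : Σ u : ↥W2, {v : List (Fin m) // v ∈ C' ∧ Φ.cyl v ⊆ Φ.cyl u.1} =>
          μ (Φ.cyl x.2.1) ^ (α / s))).symm
    rw [step2]
    have hinj : Function.Injective
        (fun x : Σ u : ↥W2, {v : List (Fin m) // v ∈ C' ∧ Φ.cyl v ⊆ Φ.cyl u.1} =>
          (⟨x.2.1, x.2.2.1⟩ : ↥C')) := by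
      rintro ⟨u, v, hv1, hv2⟩ ⟨u', v', hv1', hv2'⟩ h
      simp only [Subtype.mk.injEq] at h
      subst h
      have huu : u = u' := by
        obtain ⟨x0, hx0⟩ := Φ.cyl_nonempty v
        have hnd : ¬ Disjoint (Φ.cyl u.1) (Φ.cyl u'.1) :=
          Set.not_disjoint_iff.mpr ⟨x0, hv2 hx0, hv2' hx0⟩
        have hpre : u.1 <+: u'.1 ∨ u'.1 <+: u.1 := by
          by_contra hcon
          push_neg at hcon
          exact hnd (Φ.cyl_disjoint hcon.1 hcon.2)
        rcases hpre with hp | hp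
        · exact Subtype.ext (u'.2.2 u.1 hp u.2.1)
        · exact Subtype.ext ((u.2.2 u'.1 hp u'.2.1).symm)
      subst huu
      rfl
    exact ENNReal.tsum_comp_le_tsum_of_injective hinj
      (fun v : ↥C' => μ (Φ.cyl v.1) ^ (α / s))
  refine ⟨C', hsubC, key_pack, ?_⟩
  calc Φ.hContent μ s α (⋃ w ∈ C, Φ.cyl w)
      ≤ ∑' u : ↥(C' ∪ W2), μ (Φ.cyl u.1) ^ (α / s) := h1
    _ ≤ (∑' u : ↥C', μ (Φ.cyl u.1) ^ (α / s)) +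
        ∑' u : ↥W2, μ (Φ.cyl u.1) ^ (α / s) := h2
    _ ≤ (∑' u : ↥C', μ (Φ.cyl u.1) ^ (α / s)) +
        ∑' u : ↥C', μ (Φ.cyl u.1) ^ (α / s) := add_le_add_right h3 _
    _ = 2 * ∑' u : ↥C', μ (Φ.cyl u.1) ^ (α / s) := (two_mul _).symm
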